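/- The subspace M = {(1+z)(a + bz²) : a, b ∈ ℂ} of H²(𝔻) is nearly (S²)*-invariant and nearly (S³)*-invariant, but it is not nearly S*-invariant. -/

import Mathlib

open ContinuousLinearMap

section Aux

variable {H : Type*} [NormedAddCommGroup H] [InnerProductSpace ℂ H] [CompleteSpace H]

lemma aux_adj0 (e : HilbertBasis ℕ ℂ H) (S : H →L[ℂ] H)
    (hS : ∀ n : ℕ, S (e n) = e (n + 1)) : adjoint S (e 0) = 0 := by
  have hoe := orthonormal_iff_ite.mp e.orthonormal
  apply e.repr.injective
  ext i
  simp only [map_zero, e.repr_apply_apply, adjoint_inner_right, hS, hoe]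
  simp

lemma aux_adjn (e : HilbertBasis ℕ ℂ H) (S : H →L[ℂ] H)
    (hS : ∀ n : ℕ, S (e n) = e (n + 1)) (n : ℕ) : adjoint S (e (n + 1)) = e n := by
  have hoe := orthonormal_iff_ite.mp e.orthonormal
  apply e.repr.injective
  ext i
  simp only [e.repr_apply_apply, adjoint_inner_right, hS, hoe]
  simp

end Aux

/-- Hardy space model: `H` with Hilbert basis `e n ↔ zⁿ`, shift `S : e n ↦ e (n+1)`.
`M = {(1+z)(a + bz²) : a, b ∈ ℂ}` (the span of `1+z` and `z²+z³`) is nearly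
`(S²)*`-invariant and nearly `(S³)*`-invariant, but not nearly `S*`-invariant. -/
theorem stmt_14 {H : Type*} [NormedAddCommGroup H] [InnerProductSpace ℂ H] [CompleteSpace H]
    (e : HilbertBasis ℕ ℂ H) (S : H →L[ℂ] H) (hS : ∀ n : ℕ, S (e n) = e (n + 1))
    (M : Set H)
    (hM : M = {x | ∃ a b : ℂ, x = a • (e 0 + e 1) + b • (e 2 + e 3)}) :
    (∀ f ∈ M, (∃ g, (S ^ 2) g = f) → ContinuousLinearMap.adjoint (S ^ 2) f ∈ M) ∧
    (∀ f ∈ M, (∃ g, (S ^ 3) g = f) → ContinuousLinearMap.adjoint (S ^ 3) f ∈ M) ∧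
    ¬ (∀ f ∈ M, (∃ g, S g = f) → ContinuousLinearMap.adjoint S f ∈ M) := by
  have hoe := orthonormal_iff_ite.mp e.orthonormal
  have h0 := aux_adj0 e S hS
  have hn := aux_adjn e S hS
  have hadj2 : ∀ x : H, adjoint (S ^ 2) x = adjoint S (adjoint S x) := by
    intro x
    rw [sq, ContinuousLinearMap.mul_def, ContinuousLinearMap.adjoint_comp]
    rfl
  have hadj3 : ∀ x : H, adjoint (S ^ 3) x = adjoint S (adjoint S (adjoint S x)) := by
    intro x
    rw [pow_succ, ContinuousLinearMap.mul_def, ContinuousLinearMap.adjoint_comp]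
    rw [ContinuousLinearMap.comp_apply, hadj2]
  -- inner products with M elements
  have hip : ∀ (i : ℕ) (a b : ℂ),
      (inner ℂ (e i) (a • (e 0 + e 1) + b • (e 2 + e 3)) : ℂ) =
        a * (if i = 0 then 1 else 0) + a * (if i = 1 then 1 else 0) +
        (b * (if i = 2 then 1 else 0) + b * (if i = 3 then 1 else 0)) := by
    intro i a b
    simp [inner_add_right, inner_smul_right, hoe, mul_add]
  refine ⟨?_, ?_, ?_⟩
  · rintro f hf ⟨g, hg⟩
    rw [hM] at hf ⊢
    obtain ⟨a, b, rfl⟩ := hf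
    have ha : a = 0 := by
      have h1 : (inner ℂ (e 0) ((S ^ 2) g) : ℂ) = 0 := by
        rw [← ContinuousLinearMap.adjoint_inner_left, hadj2, h0, map_zero, inner_zero_left]
      rw [hg, hip 0 a b] at h1
      simpa using h1
    refine ⟨b, 0, ?_⟩
    rw [ha, hadj2]
    simp only [zero_smul, zero_add, map_smul, map_add, h0, hn 0, hn 1, hn 2]
    simp [smul_add]
  · rintro f hf ⟨g, hg⟩
    rw [hM] at hf ⊢
    obtain ⟨a, b, rfl⟩ := hf
    have ha : a = 0 := by
      have h1 : (inner ℂ (e 0) ((S ^ 3) g) : ℂ) = 0 := by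
        rw [← ContinuousLinearMap.adjoint_inner_left, hadj3, h0, map_zero, map_zero,
          inner_zero_left]
      rw [hg, hip 0 a b] at h1
      simpa using h1
    have hb : b = 0 := by
      have h1 : (inner ℂ (e 2) ((S ^ 3) g) : ℂ) = 0 := by
        rw [← ContinuousLinearMap.adjoint_inner_left, hadj3, hn 1, hn 0, h0, inner_zero_left]
      rw [hg, hip 2 a b] at h1
      simpa using h1
    refine ⟨0, 0, ?_⟩
    rw [ha, hb]
    simp
  · intro hcon
    have hmem : (e 2 + e 3 : H) ∈ M := by
      rw [hM]; exact ⟨0, 1, by simp⟩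
    have hrange : ∃ g, S g = (e 2 + e 3 : H) := by
      refine ⟨e 1 + e 2, ?_⟩
      rw [map_add, hS, hS]
    have := hcon _ hmem hrange
    rw [hM] at this
    obtain ⟨a, b, hab⟩ := this
    rw [map_add, hn 1, hn 2] at hab
    have h0' : (inner ℂ (e 0) (e 1 + e 2 : H) : ℂ) = a := by
      rw [hab, hip 0 a b]; simp
    have h1' : (inner ℂ (e 1) (e 1 + e 2 : H) : ℂ) = a := by
      rw [hab, hip 1 a b]; simp
    simp [inner_add_right, hoe] at h0' h1'
    rw [← h0'] at h1'
    exact one_ne_zero (α := ℂ) (by simpa [e.orthonormal.1 1] using h1')
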